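/- Let n ≥ 1 be an integer, s ∈ (0,1), and let Ω ⊂ ℝⁿ be a nonempty bounded open set whose boundary ∂Ω has Lebesgue measure zero. Let u : ℝⁿ → ℝ be measurable with u|_Ω ∈ L¹(Ω), and let ũ be the function equal to u on the closure of Ω and equal to E_u/E_1 on ℝⁿ\Ω̄. Then, with Q := ℝ²ⁿ \ ((ℝⁿ\Ω)×(ℝⁿ\Ω)), one has ∬_Q |ũ(x)−ũ(y)|²/|x−y|^{n+2s} dx dy ≤ ∬_Q |u(x)−u(y)|²/|x−y|^{n+2s} dx dy, as an inequality in [0,∞]. -/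

import Mathlib

open MeasureTheory Set
open scoped ENNReal

noncomputable section

abbrev Rn (n : ℕ) : Type := EuclideanSpace ℝ (Fin n)

/-- The cross-shaped region `Q := ℝ²ⁿ \ ((ℝⁿ\Ω)×(ℝⁿ\Ω))`. -/
def QQ {n : ℕ} (Ω : Set (Rn n)) : Set (Rn n × Rn n) := ((Ωᶜ) ×ˢ (Ωᶜ))ᶜ

/-- The Gagliardo-type energy `∬_Q |u(x)-u(y)|²/|x-y|^{n+2s} dx dy`, valued in `[0,∞]`. -/
def gagEnergy (n : ℕ) (s : ℝ) (Ω : Set (Rn n)) (u : Rn n → ℝ) : ℝ≥0∞ :=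
  ∫⁻ p in QQ Ω, ENNReal.ofReal (|u p.1 - u p.2| ^ 2 / ‖p.1 - p.2‖ ^ ((n : ℝ) + 2 * s))

/-- `E_u(x) := ∫_Ω u(z)/|x-z|^{n+2s} dz`. -/
def Efun (n : ℕ) (s : ℝ) (Ω : Set (Rn n)) (u : Rn n → ℝ) (x : Rn n) : ℝ :=
  ∫ z in Ω, u z / ‖x - z‖ ^ ((n : ℝ) + 2 * s)

open Classical in
/-- `ũ`, equal to `u` on the closure of `Ω` and to `E_u/E_1` outside. -/
def tildeFun (n : ℕ) (s : ℝ) (Ω : Set (Rn n)) (u : Rn n → ℝ) (x : Rn n) : ℝ :=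
  if x ∈ closure Ω then u x
  else Efun n s Ω u x / Efun n s Ω (fun _ => 1) x

/-! ### Auxiliary lemmas -/

lemma tilde_eq_in {n : ℕ} {s : ℝ} {Ω : Set (Rn n)} {u : Rn n → ℝ} {x : Rn n}
    (hx : x ∈ closure Ω) : tildeFun n s Ω u x = u x := by
  unfold tildeFun; exact if_pos hx

lemma tilde_eq_out {n : ℕ} {s : ℝ} {Ω : Set (Rn n)} {u : Rn n → ℝ} {x : Rn n}
    (hx : x ∉ closure Ω) :
    tildeFun n s Ω u x = Efun n s Ω u x / Efun n s Ω (fun _ => 1) x := by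
  unfold tildeFun; exact if_neg hx

/-- The abstract weighted-mean minimization lemma. -/
lemma key_min {X : Type*} [MeasurableSpace X] {μ : Measure X} {w v : X → ℝ}
    (hw : Integrable w μ) (hwv : Integrable (fun x => w x * v x) μ)
    (hwpos : ∀ᵐ x ∂μ, 0 < w x) (hwIpos : 0 < ∫ x, w x ∂μ)
    (hv : AEMeasurable v μ) (c : ℝ) :
    ∫⁻ x, ENNReal.ofReal (w x * (v x - (∫ x, w x * v x ∂μ) / (∫ x, w x ∂μ)) ^ 2) ∂μ ≤
      ∫⁻ x, ENNReal.ofReal (w x * (v x - c) ^ 2) ∂μ := by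
  set c' : ℝ := (∫ x, w x * v x ∂μ) / (∫ x, w x ∂μ) with hc'
  by_cases hfin : ∫⁻ x, ENNReal.ofReal (w x * (v x - c) ^ 2) ∂μ = ⊤
  · exact hfin ▸ le_top
  have hgm : AEStronglyMeasurable (fun x => w x * (v x - c) ^ 2) μ :=
    (hw.aemeasurable.mul ((hv.sub aemeasurable_const).pow_const 2)).aestronglyMeasurable
  have hgnn : 0 ≤ᵐ[μ] fun x => w x * (v x - c) ^ 2 :=
    hwpos.mono fun x hx => mul_nonneg hx.le (sq_nonneg _)
  have hgint : Integrable (fun x => w x * (v x - c) ^ 2) μ :=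
    ⟨hgm, (hasFiniteIntegral_iff_ofReal hgnn).2 (lt_top_iff_ne_top.2 hfin)⟩
  have hfnn : 0 ≤ᵐ[μ] fun x => w x * (v x - c') ^ 2 :=
    hwpos.mono fun x hx => mul_nonneg hx.le (sq_nonneg _)
  have hfid : (fun x => w x * (v x - c') ^ 2)
      = fun x => w x * (v x - c) ^ 2 - (2 * (c' - c)) * (w x * v x)
          + (2 * (c' - c) * c + (c' - c) ^ 2) * w x := by
    funext x; ring
  have hfint : Integrable (fun x => w x * (v x - c') ^ 2) μ := by
    rw [hfid]
    exact (hgint.sub (hwv.const_mul _)).add (hw.const_mul _)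
  have hwv_eq : ∫ x, w x * v x ∂μ = c' * ∫ x, w x ∂μ := by
    rw [hc', div_mul_cancel₀]
    exact ne_of_gt hwIpos
  have hI : ∫ x, w x * (v x - c') ^ 2 ∂μ
      = ∫ x, w x * (v x - c) ^ 2 ∂μ - (c' - c) ^ 2 * ∫ x, w x ∂μ := by
    rw [hfid,
      integral_add (f := fun x => w x * (v x - c) ^ 2 - 2 * (c' - c) * (w x * v x))
        (g := fun x => (2 * (c' - c) * c + (c' - c) ^ 2) * w x)
        (hgint.sub (hwv.const_mul _)) (hw.const_mul _),
      integral_sub (f := fun x => w x * (v x - c) ^ 2)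
        (g := fun x => 2 * (c' - c) * (w x * v x)) hgint (hwv.const_mul _),
      integral_const_mul, integral_const_mul, hwv_eq]
    ring
  have hle : ∫ x, w x * (v x - c') ^ 2 ∂μ ≤ ∫ x, w x * (v x - c) ^ 2 ∂μ := by
    rw [hI]
    have h0 : 0 ≤ (c' - c) ^ 2 * ∫ x, w x ∂μ := mul_nonneg (sq_nonneg _) hwIpos.le
    linarith
  calc ∫⁻ x, ENNReal.ofReal (w x * (v x - c') ^ 2) ∂μ
      = ENNReal.ofReal (∫ x, w x * (v x - c') ^ 2 ∂μ) :=
        (ofReal_integral_eq_lintegral_ofReal hfint hfnn).symm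
    _ ≤ ENNReal.ofReal (∫ x, w x * (v x - c) ^ 2 ∂μ) := ENNReal.ofReal_le_ofReal hle
    _ = ∫⁻ x, ENNReal.ofReal (w x * (v x - c) ^ 2) ∂μ :=
        ofReal_integral_eq_lintegral_ofReal hgint hgnn

/-- The key pointwise (in `y`) minimization property of `ũ` at exterior points. -/
lemma keyY {n : ℕ} {s : ℝ} (hs0 : 0 < s)
    {Ω : Set (Rn n)} (hΩne : Ω.Nonempty) (hΩo : IsOpen Ω) (hΩb : Bornology.IsBounded Ω)
    {u : Rn n → ℝ} (hu : Measurable u) (hui : IntegrableOn u Ω)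
    {y : Rn n} (hy : y ∉ closure Ω) (c : ℝ) :
    ∫⁻ x in Ω, ENNReal.ofReal (|u x - tildeFun n s Ω u y| ^ 2 / ‖x - y‖ ^ ((n : ℝ) + 2 * s))
      ≤ ∫⁻ x in Ω, ENNReal.ofReal (|u x - c| ^ 2 / ‖x - y‖ ^ ((n : ℝ) + 2 * s)) := by
  have hp : (0 : ℝ) < (n : ℝ) + 2 * s := by
    have : (0:ℝ) ≤ (n : ℝ) := Nat.cast_nonneg n
    linarith
  set p : ℝ := (n : ℝ) + 2 * s with hpdef
  set w : Rn n → ℝ := fun x => (‖y - x‖ ^ p)⁻¹ with hwdef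
  -- distance bounds
  obtain ⟨ε, hε, hball⟩ :=
    Metric.isOpen_iff.1 (isClosed_closure (s := Ω)).isOpen_compl y hy
  have hdist : ∀ z ∈ Ω, ε ≤ ‖y - z‖ := by
    intro z hz
    by_contra h
    push_neg at h
    have hzball : z ∈ Metric.ball y ε := by
      rw [Metric.mem_ball, dist_comm, dist_eq_norm]
      exact h
    exact (hball hzball) (subset_closure hz)
  obtain ⟨r, hr⟩ := hΩb.subset_closedBall 0
  set R : ℝ := max (‖y‖ + r) 1 with hRdef
  have hR1 : (1:ℝ) ≤ R := le_max_right _ _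
  have hR0 : (0:ℝ) < R := lt_of_lt_of_le one_pos hR1
  have hub : ∀ z ∈ Ω, ‖y - z‖ ≤ R := by
    intro z hz
    have hz' : ‖z‖ ≤ r := by
      have := hr hz
      rwa [Metric.mem_closedBall, dist_zero_right] at this
    calc ‖y - z‖ ≤ ‖y‖ + ‖z‖ := norm_sub_le _ _
      _ ≤ ‖y‖ + r := by linarith
      _ ≤ R := le_max_left _ _
  -- w bounds on Ω
  have hwpos : ∀ z ∈ Ω, 0 < w z := fun z hz =>
    inv_pos.2 (Real.rpow_pos_of_pos (lt_of_lt_of_le hε (hdist z hz)) p)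
  have hwle : ∀ z ∈ Ω, w z ≤ (ε ^ p)⁻¹ := fun z hz =>
    inv_anti₀ (Real.rpow_pos_of_pos hε p)
      (Real.rpow_le_rpow hε.le (hdist z hz) hp.le)
  have hwge : ∀ z ∈ Ω, (R ^ p)⁻¹ ≤ w z := fun z hz =>
    inv_anti₀ (Real.rpow_pos_of_pos (lt_of_lt_of_le hε (hdist z hz)) p)
      (Real.rpow_le_rpow (norm_nonneg _) (hub z hz) hp.le)
  -- measurability and integrability
  have hwm : Measurable w := ((continuous_const.sub continuous_id).norm.measurable.pow_const p).inv
  have hΩfin : volume Ω < ⊤ := hΩb.measure_lt_top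
  have hmΩ : MeasurableSet Ω := hΩo.measurableSet
  have hwint : IntegrableOn w Ω := by
    refine Integrable.mono' (g := fun _ => (ε ^ p)⁻¹)
      (integrableOn_const hΩfin.ne) hwm.aestronglyMeasurable ?_
    filter_upwards [ae_restrict_mem hmΩ] with z hz
    rw [Real.norm_eq_abs, abs_of_nonneg (hwpos z hz).le]
    exact hwle z hz
  have hwvint : IntegrableOn (fun x => w x * u x) Ω := by
    refine Integrable.mono' (g := fun x => (ε ^ p)⁻¹ * ‖u x‖)
      (hui.norm.const_mul _) (hwm.mul hu).aestronglyMeasurable ?_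
    filter_upwards [ae_restrict_mem hmΩ] with z hz
    rw [norm_mul, Real.norm_eq_abs (w z), abs_of_nonneg (hwpos z hz).le]
    exact mul_le_mul_of_nonneg_right (hwle z hz) (norm_nonneg _)
  have hwIpos : 0 < ∫ x in Ω, w x := by
    have h1 : ∫ x in Ω, ((R ^ p)⁻¹ : ℝ) ≤ ∫ x in Ω, w x :=
      setIntegral_mono_on (integrableOn_const hΩfin.ne) hwint hmΩ (fun z hz => hwge z hz)
    have h2 : ∫ x in Ω, ((R ^ p)⁻¹ : ℝ) = (volume Ω).toReal * (R ^ p)⁻¹ := by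
      rw [setIntegral_const, smul_eq_mul]
      rfl
    have h3 : 0 < (volume Ω).toReal :=
      ENNReal.toReal_pos (ne_of_gt (hΩo.measure_pos volume hΩne)) hΩfin.ne
    have h4 : 0 < ((R ^ p)⁻¹ : ℝ) := inv_pos.2 (Real.rpow_pos_of_pos hR0 p)
    nlinarith
  -- identify tildeFun at y with the weighted mean
  have htildey : tildeFun n s Ω u y = (∫ x in Ω, w x * u x) / (∫ x in Ω, w x) := by
    rw [tilde_eq_out hy]
    congr 1
    · unfold Efun
      rw [← hpdef]
      refine integral_congr_ae (Filter.Eventually.of_forall fun z => ?_)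
      exact div_eq_inv_mul _ _
    · unfold Efun
      rw [← hpdef]
      refine integral_congr_ae (Filter.Eventually.of_forall fun z => ?_)
      exact one_div _
  -- rewrite the integrands
  have hrw : ∀ (a : ℝ) (x : Rn n), |u x - a| ^ 2 / ‖x - y‖ ^ p = w x * (u x - a) ^ 2 := by
    intro a x
    rw [hwdef, sq_abs, norm_sub_rev x y, div_eq_inv_mul]
  simp only [hrw, htildey]
  exact key_min hwint hwvint
    ((ae_restrict_mem hmΩ).mono fun z hz => hwpos z hz) hwIpos hu.aemeasurable c

lemma tilde_measurable {n : ℕ} {s : ℝ} {Ω : Set (Rn n)} {u : Rn n → ℝ}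
    (hu : Measurable u) : Measurable (tildeFun n s Ω u) := by
  unfold tildeFun
  have hker : ∀ v : Rn n → ℝ, Measurable v → Measurable (Efun n s Ω v) := by
    intro v hv
    have h : StronglyMeasurable fun q : Rn n × Rn n => v q.2 / ‖q.1 - q.2‖ ^ ((n : ℝ) + 2 * s) :=
      ((hv.comp measurable_snd).div
        ((measurable_fst.sub measurable_snd).norm.pow_const _)).stronglyMeasurable
    exact (h.integral_prod_right').measurable
  exact Measurable.ite isClosed_closure.measurableSet hu
    ((hker u hu).div (hker (fun _ => 1) measurable_const))

/-- the nonlocal-Neumann extension `ũ` has smaller Gagliardo energy. -/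
theorem statement0 {n : ℕ} (hn : 1 ≤ n) {s : ℝ} (hs0 : 0 < s) (hs1 : s < 1)
    {Ω : Set (Rn n)} (hΩne : Ω.Nonempty) (hΩo : IsOpen Ω)
    (hΩb : Bornology.IsBounded Ω) (hfr : volume (frontier Ω) = 0)
    {u : Rn n → ℝ} (hu : Measurable u) (hui : IntegrableOn u Ω) :
    gagEnergy n s Ω (tildeFun n s Ω u) ≤ gagEnergy n s Ω u := by
  classical
  set ut : Rn n → ℝ := tildeFun n s Ω u with hut
  have hutm : Measurable ut := tilde_measurable hu
  set F : (Rn n → ℝ) → Rn n × Rn n → ℝ≥0∞ :=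
    fun f q => ENNReal.ofReal (|f q.1 - f q.2| ^ 2 / ‖q.1 - q.2‖ ^ ((n : ℝ) + 2 * s)) with hF
  have hFm : ∀ f : Rn n → ℝ, Measurable f → Measurable (F f) := fun f hf =>
    ENNReal.measurable_ofReal.comp
      ((((hf.comp measurable_fst).sub (hf.comp measurable_snd)).abs.pow_const 2).div
        ((measurable_fst.sub measurable_snd).norm.pow_const _))
  have hmΩ : MeasurableSet Ω := hΩo.measurableSet
  -- decomposition of Q
  have hQ : QQ Ω = (Ω ×ˢ Ω) ∪ ((Ω ×ˢ Ωᶜ) ∪ ((Ωᶜ) ×ˢ Ω)) := by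
    ext q
    simp only [QQ, Set.mem_compl_iff, Set.mem_prod, Set.mem_union]
    tauto
  have hd1 : Disjoint (Ω ×ˢ Ω) ((Ω ×ˢ Ωᶜ) ∪ ((Ωᶜ) ×ˢ Ω)) := by
    rw [Set.disjoint_left]
    rintro q ⟨h1, h2⟩ (⟨_, h4⟩ | ⟨h3, _⟩)
    · exact h4 h2
    · exact h3 h1
  have hd2 : Disjoint (Ω ×ˢ Ωᶜ) ((Ωᶜ) ×ˢ Ω) := by
    rw [Set.disjoint_left]
    rintro q ⟨h1, _⟩ ⟨h3, _⟩
    exact h3 h1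
  have hsplit : ∀ f : Rn n → ℝ, gagEnergy n s Ω f
      = (∫⁻ q in Ω ×ˢ Ω, F f q) + ((∫⁻ q in Ω ×ˢ Ωᶜ, F f q) + ∫⁻ q in (Ωᶜ) ×ˢ Ω, F f q) := by
    intro f
    show ∫⁻ q in QQ Ω, F f q = _
    rw [hQ, lintegral_union ((hmΩ.prod hmΩ.compl).union (hmΩ.compl.prod hmΩ)) hd1,
      lintegral_union (hmΩ.compl.prod hmΩ) hd2]
  -- product-measure rewriting
  have hvol : (volume : Measure (Rn n × Rn n)) = (volume : Measure (Rn n)).prod volume := rfl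
  have hprodr : ∀ A B : Set (Rn n),
      (volume : Measure (Rn n × Rn n)).restrict (A ×ˢ B)
        = ((volume : Measure (Rn n)).restrict A).prod (volume.restrict B) := by
    intro A B
    rw [hvol, Measure.prod_restrict]
  -- a.e. exterior points
  have hae : ∀ᵐ y ∂(volume.restrict (Ωᶜ)), y ∉ closure Ω := by
    have h1 : ∀ᵐ y : Rn n ∂volume, y ∉ frontier Ω := by
      rw [← measure_eq_zero_iff_ae_notMem]; exact hfr
    filter_upwards [ae_restrict_of_ae h1, ae_restrict_mem hmΩ.compl] with y hy1 hy2
    intro hcl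
    exact hy1 ⟨hcl, by rwa [hΩo.interior_eq]⟩
  -- Piece A
  have hA : ∫⁻ q in Ω ×ˢ Ω, F ut q = ∫⁻ q in Ω ×ˢ Ω, F u q := by
    refine setLIntegral_congr_fun (hmΩ.prod hmΩ) (fun q hq => ?_)
    simp only [hF, hut]
    rw [tilde_eq_in (subset_closure hq.1), tilde_eq_in (subset_closure hq.2)]
  -- Piece B
  have hB : ∫⁻ q in Ω ×ˢ Ωᶜ, F ut q ≤ ∫⁻ q in Ω ×ˢ Ωᶜ, F u q := by
    rw [hprodr Ω (Ωᶜ), lintegral_prod_symm _ ((hFm ut hutm).aemeasurable),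
      lintegral_prod_symm _ ((hFm u hu).aemeasurable)]
    refine lintegral_mono_ae (hae.mono fun y hy => ?_)
    have h1 : ∫⁻ x in Ω, F ut (x, y)
        = ∫⁻ x in Ω, ENNReal.ofReal
            (|u x - tildeFun n s Ω u y| ^ 2 / ‖x - y‖ ^ ((n : ℝ) + 2 * s)) := by
      refine setLIntegral_congr_fun hmΩ (fun x hx => ?_)
      simp only [hF, hut]
      rw [tilde_eq_in (subset_closure hx)]
    rw [h1]
    exact keyY hs0 hΩne hΩo hΩb hu hui hy (u y)
  -- Piece C
  have hC : ∫⁻ q in (Ωᶜ) ×ˢ Ω, F ut q ≤ ∫⁻ q in (Ωᶜ) ×ˢ Ω, F u q := by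
    rw [hprodr (Ωᶜ) Ω, lintegral_prod _ ((hFm ut hutm).aemeasurable),
      lintegral_prod _ ((hFm u hu).aemeasurable)]
    refine lintegral_mono_ae (hae.mono fun x hx => ?_)
    have h1 : ∫⁻ y in Ω, F ut (x, y)
        = ∫⁻ y in Ω, ENNReal.ofReal
            (|u y - tildeFun n s Ω u x| ^ 2 / ‖y - x‖ ^ ((n : ℝ) + 2 * s)) := by
      refine setLIntegral_congr_fun hmΩ (fun y hy => ?_)
      simp only [hF, hut]
      rw [tilde_eq_in (subset_closure hy), abs_sub_comm, norm_sub_rev]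
    have h2 : ∫⁻ y in Ω, F u (x, y)
        = ∫⁻ y in Ω, ENNReal.ofReal
            (|u y - u x| ^ 2 / ‖y - x‖ ^ ((n : ℝ) + 2 * s)) := by
      refine setLIntegral_congr_fun hmΩ (fun y hy => ?_)
      simp only [hF]
      rw [abs_sub_comm, norm_sub_rev]
    rw [h1, h2]
    exact keyY hs0 hΩne hΩo hΩb hu hui hx (u x)
  rw [hsplit ut, hsplit u, hA]
  exact add_le_add (le_refl _) (add_le_add hB hC)
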